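/- The subspace V = { x ∈ ℝ⁸ : x₁+x₂+x₃+x₄ = 0, x₅ = x₆ = x₇ = x₈ = 0 } is a 3-dimensional invariant subspace of both M₊ and M₋. -/
import Mathlib


def Mplus : Matrix (Fin 8) (Fin 8) ℚ :=
  !![0,0,0,0,1,1,1,1;
     0,0,1,3,0,0,0,0;
     0,2,2,0,0,0,0,0;
     3,1,0,0,0,0,0,0;
     1,1,1,1,0,0,0,0;
     0,0,0,0,0,0,1,3;
     0,0,0,0,0,2,2,0;
     0,0,0,0,3,1,0,0]

def Mminus : Matrix (Fin 8) (Fin 8) ℚ :=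
  !![0,0,1,3,0,0,0,0;
     0,2,2,0,0,0,0,0;
     3,1,0,0,0,0,0,0;
     0,0,0,0,1,1,1,1;
     0,0,0,0,0,0,1,3;
     0,0,0,0,0,2,2,0;
     0,0,0,0,3,1,0,0;
     1,1,1,1,0,0,0,0]


open Matrix in
@[simp] lemma cons_val_five' {α : Type*} {m : ℕ} (x : α) (u : Fin (m+5) → α) :
    vecCons x u 5 = vecHead (vecTail (vecTail (vecTail (vecTail u)))) := rfl

open Matrix in
@[simp] lemma cons_val_six' {α : Type*} {m : ℕ} (x : α) (u : Fin (m+6) → α) :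
    vecCons x u 6 = vecHead (vecTail (vecTail (vecTail (vecTail (vecTail u))))) := rfl

open Matrix in
@[simp] lemma cons_val_seven' {α : Type*} {m : ℕ} (x : α) (u : Fin (m+7) → α) :
    vecCons x u 7 = vecHead (vecTail (vecTail (vecTail (vecTail (vecTail (vecTail u)))))) := rfl

def A : Matrix (Fin 5) (Fin 8) ℚ :=
  !![1,1,1,1,0,0,0,0;
     0,0,0,0,1,0,0,0;
     0,0,0,0,0,1,0,0;
     0,0,0,0,0,0,1,0;
     0,0,0,0,0,0,0,1]

set_option maxHeartbeats 2000000 in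
theorem invariant_subspace :
    ∃ V : Submodule ℚ (Fin 8 → ℚ),
      (V : Set (Fin 8 → ℚ)) =
        {x | x 0 + x 1 + x 2 + x 3 = 0 ∧ x 4 = 0 ∧ x 5 = 0 ∧ x 6 = 0 ∧ x 7 = 0} ∧
      Module.finrank ℚ V = 3 ∧
      ∀ x ∈ V, Mplus.mulVec x ∈ V ∧ Mminus.mulVec x ∈ V := by
  refine ⟨LinearMap.ker A.mulVecLin, ?_, ?_, ?_⟩
  · ext x
    simp [A, Matrix.mulVecLin_apply, Matrix.mulVec, dotProduct,
      Fin.sum_univ_eight, funext_iff, Fin.forall_fin_succ]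
  · have hs : Function.Surjective A.mulVecLin := by
      intro y
      refine ⟨![y 0, 0, 0, 0, y 1, y 2, y 3, y 4], ?_⟩
      funext i
      fin_cases i <;>
        simp [A, Matrix.mulVecLin_apply, Matrix.mulVec, dotProduct,
          Fin.sum_univ_eight]
    have h := LinearMap.finrank_range_add_finrank_ker A.mulVecLin
    rw [LinearMap.range_eq_top.mpr hs] at h
    simp [finrank_top, Module.finrank_fin_fun] at h
    omega
  · intro x hx
    simp only [LinearMap.mem_ker, Matrix.mulVecLin_apply] at hx ⊢
    have h := fun i => congrFun hx i
    have h0 := h 0; have h1 := h 1; have h2 := h 2; have h3 := h 3; have h4 := h 4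
    simp [A, Matrix.mulVec, dotProduct, Fin.sum_univ_eight] at h0 h1 h2 h3 h4
    constructor <;> (funext i; fin_cases i) <;>
      simp [A, Mplus, Mminus, Matrix.mulVec, dotProduct, Fin.sum_univ_eight, Matrix.vecHead, Matrix.vecTail,
        h1, h2, h3, h4] <;> linarith
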